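/- Leading-order phase error of the predictor–corrector scheme: Let c > 0, ℵ > 0, θ ∈ [0,1], ς ∈ ℝ. Let φ(ξ) = cℵ·ξ/√(1 + ς²ξ²/3) be the exact phase shift, and let φ̂(ξ) = arccos(A(ξ)/|ρ(ξ)|) be the discrete phase shift, where for ξ ∈ (0,π): ζ(ξ) = sin²(ξ/2), ħ(ξ) = 1 + (4ς²/3)ζ(ξ), 𝔡(ξ) = 4c²ℵ²ζ(ξ), β(ξ) = cℵ·sin ξ, A(ξ) = 1 − 𝔡(ξ)(1+θ)/(2ħ(ξ)), |ρ(ξ)| = √(A(ξ)² + β(ξ)²/ħ(ξ)). Then the phase error Δφ(ξ) = φ(ξ) − φ̂(ξ) satisfies, as ξ → 0⁺, Δφ(ξ) + (cℵ/6)·((cℵ)²(3θ + 1) − 1)·ξ³ = O(ξ⁴). In particular, if cℵ = 1/√(1 + 3θ), then Δφ(ξ) = O(ξ⁴) as ξ → 0⁺. -/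

import Mathlib

open Filter Asymptotics Topology

namespace PhaseAux

noncomputable section

/-- ħ -/
def hfun (ς ξ : ℝ) : ℝ := 1 + 4 * ς ^ 2 / 3 * Real.sin (ξ / 2) ^ 2

/-- A -/
def Afun (a θ ς ξ : ℝ) : ℝ :=
  1 - 4 * a ^ 2 * Real.sin (ξ / 2) ^ 2 * (1 + θ) / (2 * hfun ς ξ)

/-- t -/
def tfun (a θ ς ξ : ℝ) : ℝ :=
  a * Real.sin ξ * (Real.sqrt (hfun ς ξ))⁻¹ * (Afun a θ ς ξ)⁻¹

lemma hfun_ge_one (ς ξ : ℝ) : 1 ≤ hfun ς ξ := by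
  have : 0 ≤ 4 * ς ^ 2 / 3 * Real.sin (ξ / 2) ^ 2 := by positivity
  simp [hfun]; linarith

lemma hfun_pos (ς ξ : ℝ) : 0 < hfun ς ξ := lt_of_lt_of_le one_pos (hfun_ge_one ς ξ)

lemma continuous_hfun (ς : ℝ) : Continuous (hfun ς) := by
  unfold hfun; fun_prop

lemma oO_mul4 {l : Filter ℝ} {f g : ℝ → ℝ} (hf : f =O[l] fun ξ => ξ ^ 4)
    (hg : g =O[l] fun _ => (1 : ℝ)) : (fun ξ => f ξ * g ξ) =O[l] fun ξ => ξ ^ 4 := by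
  simpa using hf.mul hg

lemma oO_mul4' {l : Filter ℝ} {f g : ℝ → ℝ} (hf : f =O[l] fun _ => (1 : ℝ))
    (hg : g =O[l] fun ξ => ξ ^ 4) : (fun ξ => f ξ * g ξ) =O[l] fun ξ => ξ ^ 4 := by
  simpa using hf.mul hg

lemma ev_abs_le_one : ∀ᶠ ξ : ℝ in 𝓝 0, |ξ| ≤ 1 := by
  filter_upwards [eventually_abs_sub_lt (0 : ℝ) one_pos] with ξ hξ
  simpa using hξ.le

lemma sin_err : (fun ξ : ℝ => Real.sin ξ - (ξ - ξ ^ 3 / 6)) =O[𝓝 0] fun ξ => ξ ^ 4 := by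
  rw [isBigO_iff]
  refine ⟨1, ?_⟩
  filter_upwards [ev_abs_le_one] with ξ h1
  have h := Real.sin_bound h1
  have h2 : |ξ| ^ 4 = ξ ^ 4 := by
    rw [← abs_pow]; exact abs_of_nonneg (by positivity)
  simp only [Real.norm_eq_abs]
  have h3 : |ξ ^ 4| = ξ ^ 4 := abs_of_nonneg (by positivity)
  rw [h3]
  nlinarith [abs_nonneg (Real.sin ξ - (ξ - ξ ^ 3 / 6)), pow_nonneg (abs_nonneg ξ) 4]

lemma sin_sub_id_bound {u : ℝ} (h1 : |u| ≤ 1) : |Real.sin u - u| ≤ |u| ^ 3 := by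
  have h := Real.sin_bound h1
  have h4 : |u| ^ 4 ≤ |u| ^ 3 := pow_le_pow_of_le_one (abs_nonneg u) h1 (by norm_num)
  have : |Real.sin u - u| ≤ |Real.sin u - (u - u ^ 3 / 6)| + |u ^ 3 / 6| := by
    have := abs_sub_abs_le_abs_sub (Real.sin u - u) (Real.sin u - (u - u ^ 3 / 6))
    calc |Real.sin u - u| = |(Real.sin u - (u - u ^ 3 / 6)) + (-(u ^ 3 / 6))| := by ring_nf
    _ ≤ |Real.sin u - (u - u ^ 3 / 6)| + |(-(u ^ 3 / 6))| := abs_add_le _ _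
    _ = |Real.sin u - (u - u ^ 3 / 6)| + |u ^ 3 / 6| := by rw [abs_neg]
  have h5 : |u ^ 3 / 6| = |u| ^ 3 / 6 := by rw [abs_div, abs_pow]; norm_num
  nlinarith [pow_nonneg (abs_nonneg u) 3, mul_le_of_le_one_left (pow_nonneg (abs_nonneg u) 4) h1]

lemma zeta_err : (fun ξ : ℝ => Real.sin (ξ / 2) ^ 2 - ξ ^ 2 / 4) =O[𝓝 0] fun ξ => ξ ^ 4 := by
  rw [isBigO_iff]
  refine ⟨1, ?_⟩
  filter_upwards [ev_abs_le_one] with ξ h1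
  have hu : |ξ / 2| ≤ 1 := by rw [abs_div]; simp; linarith [abs_nonneg ξ]
  have h2 : Real.sin (ξ / 2) ^ 2 - ξ ^ 2 / 4 =
      (Real.sin (ξ / 2) - ξ / 2) * (Real.sin (ξ / 2) + ξ / 2) := by ring
  have h3 := sin_sub_id_bound hu
  have h4 : |Real.sin (ξ / 2) + ξ / 2| ≤ |ξ| := by
    calc |Real.sin (ξ / 2) + ξ / 2| ≤ |Real.sin (ξ / 2)| + |ξ / 2| := abs_add_le _ _
    _ ≤ |ξ / 2| + |ξ / 2| := by linarith [Real.abs_sin_le_abs (x := ξ / 2)]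
    _ = |ξ| := by rw [abs_div, abs_two]; ring
  simp only [Real.norm_eq_abs]
  rw [h2, abs_mul]
  have h5 : |ξ ^ 4| = |ξ| ^ 4 := by rw [abs_pow]
  rw [h5]
  have h6 : |ξ / 2| ^ 3 = |ξ| ^ 3 / 8 := by rw [abs_div, abs_two]; ring
  have h7 : |Real.sin (ξ / 2) - ξ / 2| * |Real.sin (ξ / 2) + ξ / 2| ≤ (|ξ| ^ 3 / 8) * |ξ| := by
    apply mul_le_mul (h6 ▸ h3) h4 (abs_nonneg _) (by positivity)
  calc |Real.sin (ξ / 2) - ξ / 2| * |Real.sin (ξ / 2) + ξ / 2| ≤ (|ξ| ^ 3 / 8) * |ξ| := h7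
  _ = |ξ| ^ 4 / 8 := by ring
  _ ≤ 1 * |ξ| ^ 4 := by nlinarith [pow_nonneg (abs_nonneg ξ) 4]

lemma inv_sqrt_exp (m : ℝ) (hm : 0 ≤ m) (w : ℝ → ℝ) (hw : ∀ ξ, 1 ≤ w ξ)
    (hwe : (fun ξ => w ξ - (1 + m * ξ ^ 2)) =O[𝓝 (0:ℝ)] fun ξ => ξ ^ 4) :
    (fun ξ => (Real.sqrt (w ξ))⁻¹ - (1 - m / 2 * ξ ^ 2)) =O[𝓝 (0:ℝ)] fun ξ => ξ ^ 4 := by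
  have hw0 : ∀ ξ, (0:ℝ) ≤ w ξ := fun ξ => le_trans zero_le_one (hw ξ)
  have hs1 : ∀ ξ, (1:ℝ) ≤ Real.sqrt (w ξ) := fun ξ => by
    rw [Real.one_le_sqrt]; exact hw ξ
  have hsp : ∀ ξ, (0:ℝ) < Real.sqrt (w ξ) := fun ξ => lt_of_lt_of_le one_pos (hs1 ξ)
  -- step A : sqrt expansion
  have hden : ∀ ξ : ℝ, (0:ℝ) < Real.sqrt (w ξ) + (1 + m / 2 * ξ ^ 2) := fun ξ => by
    have := hs1 ξ; nlinarith [sq_nonneg ξ]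
  have idA : ∀ ξ : ℝ, Real.sqrt (w ξ) - (1 + m / 2 * ξ ^ 2) =
      ((w ξ - (1 + m * ξ ^ 2)) - m ^ 2 / 4 * ξ ^ 4) *
        (Real.sqrt (w ξ) + (1 + m / 2 * ξ ^ 2))⁻¹ := by
    intro ξ
    have h2 : Real.sqrt (w ξ) ^ 2 = w ξ := Real.sq_sqrt (hw0 ξ)
    have hne := (hden ξ).ne'
    field_simp
    nlinarith [h2]
  have oinvden : (fun ξ => (Real.sqrt (w ξ) + (1 + m / 2 * ξ ^ 2))⁻¹) =O[𝓝 (0:ℝ)]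
      (fun _ => (1:ℝ)) := by
    apply isBigO_of_le
    intro ξ
    simp only [Real.norm_eq_abs, abs_inv, norm_one]
    rw [abs_of_pos (hden ξ)]
    rw [inv_le_one_iff₀]
    right
    have := hs1 ξ; nlinarith [sq_nonneg ξ]
  have oA : (fun ξ => Real.sqrt (w ξ) - (1 + m / 2 * ξ ^ 2)) =O[𝓝 (0:ℝ)] fun ξ => ξ ^ 4 := by
    refine (oO_mul4 ?_ oinvden).congr (fun ξ => (idA ξ).symm) (fun _ => rfl)
    have h2 : (fun ξ : ℝ => m ^ 2 / 4 * ξ ^ 4) =O[𝓝 (0:ℝ)] fun ξ => ξ ^ 4 :=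
      (isBigO_refl (fun ξ : ℝ => ξ ^ 4) _).const_mul_left _
    exact hwe.sub h2
  -- step B
  have idB : ∀ ξ : ℝ, (Real.sqrt (w ξ))⁻¹ - (1 - m / 2 * ξ ^ 2) =
      (m ^ 2 / 4 * ξ ^ 4 - (Real.sqrt (w ξ) - (1 + m / 2 * ξ ^ 2)) * (1 - m / 2 * ξ ^ 2)) *
        (Real.sqrt (w ξ))⁻¹ := by
    intro ξ
    have hne := (hsp ξ).ne'
    field_simp
    ring
  have oinvs : (fun ξ => (Real.sqrt (w ξ))⁻¹) =O[𝓝 (0:ℝ)] (fun _ => (1:ℝ)) := by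
    apply isBigO_of_le
    intro ξ
    simp only [Real.norm_eq_abs, abs_inv, norm_one]
    rw [abs_of_pos (hsp ξ), inv_le_one_iff₀]
    right; exact hs1 ξ
  refine (oO_mul4 ?_ oinvs).congr (fun ξ => (idB ξ).symm) (fun _ => rfl)
  have h2 : (fun ξ : ℝ => m ^ 2 / 4 * ξ ^ 4) =O[𝓝 (0:ℝ)] fun ξ => ξ ^ 4 :=
    (isBigO_refl (fun ξ : ℝ => ξ ^ 4) _).const_mul_left _
  have h3 : (fun ξ : ℝ => 1 - m / 2 * ξ ^ 2) =O[𝓝 (0:ℝ)] (fun _ => (1:ℝ)) := by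
    have hcontp : Continuous (fun ξ : ℝ => 1 - m / 2 * ξ ^ 2) := by fun_prop
    exact (hcontp.tendsto 0).isBigO_one ℝ
  exact h2.sub (oO_mul4 oA h3)

lemma arctan_pt {x : ℝ} (h0 : 0 ≤ x) (h1 : x ≤ 1) :
    |Real.arctan x - (x - x ^ 3 / 3)| ≤ x ^ 4 := by
  rcases eq_or_lt_of_le h0 with h | hx
  · simp [← h]
  set F : ℝ → ℝ := fun y => Real.arctan y - (y - y ^ 3 / 3) with hF
  have hder : ∀ y : ℝ, HasDerivAt F (y ^ 4 / (1 + y ^ 2)) y := by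
    intro y
    have h1' := Real.hasDerivAt_arctan y
    have h2' : HasDerivAt (fun y : ℝ => y - y ^ 3 / 3) (1 - 3 * y ^ 2 / 3) y := by
      refine ((hasDerivAt_id' y).fun_sub ((hasDerivAt_pow 3 y).div_const 3)).congr_deriv ?_
      norm_num
    have h3' := h1'.fun_sub h2'
    refine h3'.congr_deriv ?_
    have : (1:ℝ) + y ^ 2 > 0 := by positivity
    field_simp
    ring
  have hcont : ContinuousOn F (Set.Icc 0 x) :=
    (Real.continuous_arctan.sub (by fun_prop)).continuousOn
  obtain ⟨ccc, hcmem, hceq⟩ := exists_hasDerivAt_eq_slope F (fun y => y ^ 4 / (1 + y ^ 2)) hx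
    hcont (fun y _ => hder y)
  have hF0 : F 0 = 0 := by simp [hF]
  have hFx : F x = ccc ^ 4 / (1 + ccc ^ 2) * x := by
    rw [hF0] at hceq
    have hne : (1:ℝ) + ccc ^ 2 ≠ 0 := by positivity
    field_simp at hceq ⊢
    linarith [hceq]
  have hc0 : 0 < ccc := hcmem.1
  have hcx : ccc < x := hcmem.2
  have hb : ccc ^ 4 / (1 + ccc ^ 2) ≤ ccc ^ 4 := by
    apply div_le_self (by positivity); nlinarith [sq_nonneg ccc]
  have h4 : ccc ^ 4 ≤ x ^ 4 := pow_le_pow_left₀ hc0.le hcx.le 4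
  have hcx4 : ccc ^ 4 ≤ x ^ 3 := by
    nlinarith [h4, mul_nonneg (pow_nonneg hx.le 3) (sub_nonneg.2 h1)]
  rw [show Real.arctan x - (x - x ^ 3 / 3) = F x from rfl, hFx]
  rw [abs_of_nonneg (by positivity)]
  calc ccc ^ 4 / (1 + ccc ^ 2) * x ≤ ccc ^ 4 * x := by nlinarith
  _ ≤ x ^ 3 * x := by nlinarith
  _ = x ^ 4 := by ring

lemma arccos_eq_arctan_div {x y : ℝ} (hx : 0 < x) (hy : 0 ≤ y) :
    Real.arccos (x / Real.sqrt (x ^ 2 + y ^ 2)) = Real.arctan (y / x) := by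
  have hcos : Real.cos (Real.arctan (y / x)) = x / Real.sqrt (x ^ 2 + y ^ 2) := by
    rw [Real.cos_arctan]
    have h1 : 1 + (y / x) ^ 2 = (x ^ 2 + y ^ 2) / x ^ 2 := by field_simp
    rw [h1, Real.sqrt_div' _ (by positivity), Real.sqrt_sq hx.le]
    rw [one_div, inv_div]
  have h0 : 0 ≤ Real.arctan (y / x) := by
    rw [← Real.arctan_zero]
    exact Real.arctan_strictMono.monotone (by positivity)
  have hπ : Real.arctan (y / x) ≤ Real.pi :=
    le_trans (Real.arctan_lt_pi_div_two _).le (by linarith [Real.pi_pos])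
  rw [← hcos, Real.arccos_cos h0 hπ]

lemma tendsto_hfun (ς : ℝ) : Filter.Tendsto (hfun ς) (𝓝 0) (𝓝 1) := by
  have h := (continuous_hfun ς).tendsto 0
  simpa [hfun] using h

lemma o_inv_sqrt_hfun (ς : ℝ) :
    (fun ξ => (Real.sqrt (hfun ς ξ))⁻¹) =O[𝓝 (0:ℝ)] (fun _ => (1:ℝ)) := by
  apply isBigO_of_le
  intro ξ
  have h1 : (1:ℝ) ≤ Real.sqrt (hfun ς ξ) := by
    rw [Real.one_le_sqrt]; exact hfun_ge_one ς ξ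
  simp only [Real.norm_eq_abs, abs_inv, norm_one]
  rw [abs_of_pos (lt_of_lt_of_le one_pos h1), inv_le_one_iff₀]
  right; exact h1

lemma o_inv_hfun (ς : ℝ) :
    (fun ξ => (hfun ς ξ)⁻¹) =O[𝓝 (0:ℝ)] (fun _ => (1:ℝ)) := by
  apply isBigO_of_le
  intro ξ
  simp only [Real.norm_eq_abs, abs_inv, norm_one]
  rw [abs_of_pos (hfun_pos ς ξ), inv_le_one_iff₀]
  right; exact hfun_ge_one ς ξ

lemma continuousAt_Afun (a θ ς : ℝ) : ContinuousAt (Afun a θ ς) 0 := by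
  apply ContinuousAt.sub continuousAt_const
  apply ContinuousAt.div
  · exact (by fun_prop : Continuous fun ξ : ℝ => 4 * a ^ 2 * Real.sin (ξ / 2) ^ 2 * (1 + θ)).continuousAt
  · exact (continuous_const.mul (continuous_hfun ς)).continuousAt
  · have := hfun_pos ς 0
    positivity

lemma tendsto_Afun (a θ ς : ℝ) : Filter.Tendsto (Afun a θ ς) (𝓝 0) (𝓝 1) := by
  have h := (continuousAt_Afun a θ ς).tendsto
  have h0 : Afun a θ ς 0 = 1 := by simp [Afun, hfun]
  rwa [h0] at h

lemma o_inv_Afun (a θ ς : ℝ) :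
    (fun ξ => (Afun a θ ς ξ)⁻¹) =O[𝓝 (0:ℝ)] (fun _ => (1:ℝ)) :=
  (((tendsto_Afun a θ ς).inv₀ one_ne_zero)).isBigO_one ℝ

lemma tendsto_tfun (a θ ς : ℝ) : Filter.Tendsto (tfun a θ ς) (𝓝 0) (𝓝 0) := by
  have hs : Filter.Tendsto (fun ξ : ℝ => a * Real.sin ξ) (𝓝 0) (𝓝 0) := by
    have := (Real.continuous_sin.tendsto 0)
    rw [Real.sin_zero] at this
    simpa using this.const_mul a
  have hsq : Filter.Tendsto (fun ξ : ℝ => (Real.sqrt (hfun ς ξ))⁻¹) (𝓝 0) (𝓝 1) := by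
    have h1 : Filter.Tendsto (fun ξ : ℝ => Real.sqrt (hfun ς ξ)) (𝓝 0) (𝓝 1) := by
      have := (Real.continuous_sqrt.tendsto 1).comp (tendsto_hfun ς)
      simpa [Function.comp_def] using this
    simpa using h1.inv₀ one_ne_zero
  have hv : Filter.Tendsto (fun ξ : ℝ => (Afun a θ ς ξ)⁻¹) (𝓝 0) (𝓝 1) := by
    simpa using (tendsto_Afun a θ ς).inv₀ one_ne_zero
  have h2 := (hs.mul hsq).mul hv
  have h3 : Filter.Tendsto (fun ξ : ℝ => a * Real.sin ξ * (Real.sqrt (hfun ς ξ))⁻¹ *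
      (Afun a θ ς ξ)⁻¹) (𝓝 0) (𝓝 0) := by
    simpa [mul_assoc] using h2
  exact h3

lemma o_tfun (a θ ς : ℝ) : tfun a θ ς =O[𝓝 (0:ℝ)] fun ξ => ξ := by
  have hs : (fun ξ : ℝ => Real.sin ξ) =O[𝓝 (0:ℝ)] fun ξ => ξ := by
    apply isBigO_of_le
    intro ξ
    simpa [Real.norm_eq_abs] using Real.abs_sin_le_abs (x := ξ)
  have h := ((hs.const_mul_left a).mul (o_inv_sqrt_hfun ς)).mul (o_inv_Afun a θ ς)
  refine h.congr (fun ξ => rfl) (fun ξ => by simp)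

lemma main_exp (a θ ς : ℝ) (ha : 0 < a) (hθ : 0 ≤ θ) :
    (fun ξ : ℝ => (a * ξ / Real.sqrt (1 + ς ^ 2 * ξ ^ 2 / 3) - Real.arctan (tfun a θ ς ξ))
        + a / 6 * (a ^ 2 * (3 * θ + 1) - 1) * ξ ^ 3) =O[𝓝[>] (0:ℝ)] fun ξ => ξ ^ 4 := by
  have hL : 𝓝[>] (0:ℝ) ≤ 𝓝 0 := nhdsWithin_le_nhds
  -- hfun expansion
  have hherr : (fun ξ => hfun ς ξ - (1 + ς ^ 2 / 3 * ξ ^ 2)) =O[𝓝 (0:ℝ)] fun ξ => ξ ^ 4 := by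
    refine (zeta_err.const_mul_left (4 * ς ^ 2 / 3)).congr (fun ξ => ?_) (fun _ => rfl)
    simp only [hfun]; ring
  -- 1/sqrt(hfun) expansion
  have hu : (fun ξ => (Real.sqrt (hfun ς ξ))⁻¹ - (1 - ς ^ 2 / 3 / 2 * ξ ^ 2))
      =O[𝓝 (0:ℝ)] fun ξ => ξ ^ 4 :=
    inv_sqrt_exp (ς ^ 2 / 3) (by positivity) (hfun ς) (hfun_ge_one ς) hherr
  -- 1/sqrt(1+ς²ξ²/3) expansion
  have hu0 : (fun ξ => (Real.sqrt (1 + ς ^ 2 * ξ ^ 2 / 3))⁻¹ - (1 - ς ^ 2 / 3 / 2 * ξ ^ 2))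
      =O[𝓝 (0:ℝ)] fun ξ => ξ ^ 4 := by
    apply inv_sqrt_exp (ς ^ 2 / 3) (by positivity) (fun ξ => 1 + ς ^ 2 * ξ ^ 2 / 3)
      (fun ξ => by nlinarith [sq_nonneg (ς * ξ)])
    exact (isBigO_zero _ _).congr (fun ξ => by ring) (fun _ => rfl)
  -- A expansion
  have hA : (fun ξ => Afun a θ ς ξ - (1 - a ^ 2 * (1 + θ) / 2 * ξ ^ 2))
      =O[𝓝 (0:ℝ)] fun ξ => ξ ^ 4 := by
    have oxi2 : (fun ξ : ℝ => ξ ^ 2) =O[𝓝 (0:ℝ)] (fun _ => (1:ℝ)) :=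
      (((continuous_pow 2).tendsto (0:ℝ))).isBigO_one ℝ
    have n1 : (fun ξ : ℝ => a ^ 2 * (1 + θ) / 2 * (ς ^ 2 / 3) * ξ ^ 4)
        =O[𝓝 (0:ℝ)] fun ξ => ξ ^ 4 :=
      (isBigO_refl (fun ξ : ℝ => ξ ^ 4) _).const_mul_left _
    have n2 : (fun ξ : ℝ => a ^ 2 * (1 + θ) / 2 * (4 * ς ^ 2 / 3) *
        (ξ ^ 2 * (Real.sin (ξ / 2) ^ 2 - ξ ^ 2 / 4))) =O[𝓝 (0:ℝ)] fun ξ => ξ ^ 4 :=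
      (oO_mul4' oxi2 zeta_err).const_mul_left _
    have n3 : (fun ξ : ℝ => 2 * a ^ 2 * (1 + θ) * (Real.sin (ξ / 2) ^ 2 - ξ ^ 2 / 4))
        =O[𝓝 (0:ℝ)] fun ξ => ξ ^ 4 := zeta_err.const_mul_left _
    have obase := oO_mul4 ((n1.add n2).sub n3) (o_inv_hfun ς)
    refine obase.congr (fun ξ => ?_) (fun _ => rfl)
    have h0 : hfun ς ξ ≠ 0 := (hfun_pos ς ξ).ne'
    simp only [Afun]
    field_simp
    simp only [hfun]
    ring
  -- 1/A expansion
  have hv : (fun ξ => (Afun a θ ς ξ)⁻¹ - (1 + a ^ 2 * (1 + θ) / 2 * ξ ^ 2))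
      =O[𝓝 (0:ℝ)] fun ξ => ξ ^ 4 := by
    have oV : (fun ξ : ℝ => 1 + a ^ 2 * (1 + θ) / 2 * ξ ^ 2) =O[𝓝 (0:ℝ)]
        (fun _ => (1:ℝ)) := by
      have hcontp : Continuous (fun ξ : ℝ => 1 + a ^ 2 * (1 + θ) / 2 * ξ ^ 2) := by fun_prop
      exact (hcontp.tendsto 0).isBigO_one ℝ
    have n1 : (fun ξ : ℝ => (a ^ 2 * (1 + θ) / 2) ^ 2 * ξ ^ 4) =O[𝓝 (0:ℝ)] fun ξ => ξ ^ 4 :=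
      (isBigO_refl (fun ξ : ℝ => ξ ^ 4) _).const_mul_left _
    have n2 : (fun ξ : ℝ => (Afun a θ ς ξ - (1 - a ^ 2 * (1 + θ) / 2 * ξ ^ 2)) *
        (1 + a ^ 2 * (1 + θ) / 2 * ξ ^ 2)) =O[𝓝 (0:ℝ)] fun ξ => ξ ^ 4 := oO_mul4 hA oV
    have obase := oO_mul4 (n1.sub n2) (o_inv_Afun a θ ς)
    refine obase.congr' ?_ (Filter.EventuallyEq.refl _ _)
    filter_upwards [(tendsto_Afun a θ ς).eventually_ne one_ne_zero] with ξ hne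
    have h0 : Afun a θ ς ξ ≠ 0 := hne
    field_simp
    ring
  -- t expansion
  have het : (fun ξ => tfun a θ ς ξ -
      (a * ξ + a * (a ^ 2 * (1 + θ) / 2 - 1 / 6 - ς ^ 2 / 3 / 2) * ξ ^ 3))
      =O[𝓝 (0:ℝ)] fun ξ => ξ ^ 4 := by
    have oQ : (fun ξ : ℝ => ξ ^ 4 * (a * ((-(a ^ 2 * (1 + θ) / 2) / 6 -
        ς ^ 2 / 3 * (a ^ 2 * (1 + θ) / 2) / 2 + ς ^ 2 / 3 / 12) * ξ +
        ς ^ 2 / 3 * (a ^ 2 * (1 + θ) / 2) / 12 * ξ ^ 3))) =O[𝓝 (0:ℝ)] fun ξ => ξ ^ 4 := by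
      refine oO_mul4 (isBigO_refl _ _) ?_
      have hcontp : Continuous (fun ξ : ℝ => a * ((-(a ^ 2 * (1 + θ) / 2) / 6 -
          ς ^ 2 / 3 * (a ^ 2 * (1 + θ) / 2) / 2 + ς ^ 2 / 3 / 12) * ξ +
          ς ^ 2 / 3 * (a ^ 2 * (1 + θ) / 2) / 12 * ξ ^ 3)) := by fun_prop
      exact (hcontp.tendsto 0).isBigO_one ℝ
    have oS : (fun ξ : ℝ => ξ - ξ ^ 3 / 6) =O[𝓝 (0:ℝ)] (fun _ => (1:ℝ)) := by
      have hcontp : Continuous (fun ξ : ℝ => ξ - ξ ^ 3 / 6) := by fun_prop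
      exact (hcontp.tendsto 0).isBigO_one ℝ
    have oSU : (fun ξ : ℝ => (ξ - ξ ^ 3 / 6) * (1 - ς ^ 2 / 3 / 2 * ξ ^ 2)) =O[𝓝 (0:ℝ)]
        (fun _ => (1:ℝ)) := by
      have hcontp : Continuous (fun ξ : ℝ => (ξ - ξ ^ 3 / 6) * (1 - ς ^ 2 / 3 / 2 * ξ ^ 2)) := by
        fun_prop
      exact (hcontp.tendsto 0).isBigO_one ℝ
    have T1 : (fun ξ : ℝ => (Real.sin ξ - (ξ - ξ ^ 3 / 6)) * (Real.sqrt (hfun ς ξ))⁻¹ *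
        (Afun a θ ς ξ)⁻¹) =O[𝓝 (0:ℝ)] fun ξ => ξ ^ 4 :=
      oO_mul4 (oO_mul4 sin_err (o_inv_sqrt_hfun ς)) (o_inv_Afun a θ ς)
    have T2 : (fun ξ : ℝ => (ξ - ξ ^ 3 / 6) *
        ((Real.sqrt (hfun ς ξ))⁻¹ - (1 - ς ^ 2 / 3 / 2 * ξ ^ 2)) * (Afun a θ ς ξ)⁻¹)
        =O[𝓝 (0:ℝ)] fun ξ => ξ ^ 4 :=
      oO_mul4 (oO_mul4' oS hu) (o_inv_Afun a θ ς)
    have T3 : (fun ξ : ℝ => (ξ - ξ ^ 3 / 6) * (1 - ς ^ 2 / 3 / 2 * ξ ^ 2) *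
        ((Afun a θ ς ξ)⁻¹ - (1 + a ^ 2 * (1 + θ) / 2 * ξ ^ 2))) =O[𝓝 (0:ℝ)] fun ξ => ξ ^ 4 := by
      have := oO_mul4' oSU hv
      refine this.congr (fun ξ => by ring) (fun _ => rfl)
    have obase := oQ.add (((T1.add T2).add T3).const_mul_left a)
    refine obase.congr (fun ξ => ?_) (fun _ => rfl)
    simp only [tfun]
    ring
  -- now work on the one-sided filter
  set L := 𝓝[>] (0:ℝ) with hLdef
  -- D2 : arctan remainder
  have ot4 : (fun ξ => tfun a θ ς ξ ^ 4) =O[𝓝 (0:ℝ)] fun ξ => ξ ^ 4 := by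
    simpa using (o_tfun a θ ς).pow 4
  have hD2 : (fun ξ => Real.arctan (tfun a θ ς ξ) - (tfun a θ ς ξ - tfun a θ ς ξ ^ 3 / 3))
      =O[L] fun ξ => ξ ^ 4 := by
    have hb : (fun ξ => Real.arctan (tfun a θ ς ξ) - (tfun a θ ς ξ - tfun a θ ς ξ ^ 3 / 3))
        =O[L] fun ξ => tfun a θ ς ξ ^ 4 := by
      rw [isBigO_iff]
      refine ⟨1, ?_⟩
      have hev1 : ∀ᶠ ξ in L, |tfun a θ ς ξ| < 1 := by
        apply hL
        exact (tendsto_tfun a θ ς).eventually (by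
          filter_upwards [eventually_abs_sub_lt (0:ℝ) one_pos] with y hy
          simpa using hy)
      have hev2 : ∀ᶠ ξ in L, 0 < tfun a θ ς ξ := by
        have hsin : ∀ᶠ ξ in L, 0 < Real.sin ξ := by
          have h1 : ∀ᶠ ξ in L, (0:ℝ) < ξ := eventually_mem_nhdsWithin
          have h2 : ∀ᶠ ξ in L, ξ < 1 := hL (eventually_lt_nhds one_pos)
          filter_upwards [h1, h2] with ξ hξ0 hξ1
          exact Real.sin_pos_of_pos_of_lt_pi hξ0 (by linarith [Real.pi_gt_three])
        have hApos : ∀ᶠ ξ in L, 0 < Afun a θ ς ξ :=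
          hL ((tendsto_Afun a θ ς).eventually (eventually_gt_nhds one_pos))
        filter_upwards [hsin, hApos] with ξ h1 h2
        have h3 : 0 < Real.sqrt (hfun ς ξ) := Real.sqrt_pos.2 (hfun_pos ς ξ)
        simp only [tfun]
        positivity
      filter_upwards [hev1, hev2] with ξ h1 h2
      have := arctan_pt h2.le (by cases abs_lt.1 h1; linarith)
      simp only [Real.norm_eq_abs]
      rw [abs_of_nonneg (by positivity : (0:ℝ) ≤ tfun a θ ς ξ ^ 4), one_mul]
      exact this
    exact hb.trans (ot4.mono hL)
  -- D1
  have hD1 : (fun ξ => (a * ξ) * ((Real.sqrt (1 + ς ^ 2 * ξ ^ 2 / 3))⁻¹ -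
      (1 - ς ^ 2 / 3 / 2 * ξ ^ 2))) =O[𝓝 (0:ℝ)] fun ξ => ξ ^ 4 := by
    apply oO_mul4' _ hu0
    have hcontp : Continuous (fun ξ : ℝ => a * ξ) := by fun_prop
    exact (hcontp.tendsto 0).isBigO_one ℝ
  -- D3
  have hD3 : (fun ξ => (tfun a θ ς ξ - tfun a θ ς ξ ^ 3 / 3) -
      (a * ξ + (a * (a ^ 2 * (1 + θ) / 2 - 1 / 6 - ς ^ 2 / 3 / 2) - a ^ 3 / 3) * ξ ^ 3))
      =O[𝓝 (0:ℝ)] fun ξ => ξ ^ 4 := by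
    have oW : (fun ξ : ℝ => 1 - (tfun a θ ς ξ ^ 2 + tfun a θ ς ξ *
        (a * ξ + a * (a ^ 2 * (1 + θ) / 2 - 1 / 6 - ς ^ 2 / 3 / 2) * ξ ^ 3) +
        (a * ξ + a * (a ^ 2 * (1 + θ) / 2 - 1 / 6 - ς ^ 2 / 3 / 2) * ξ ^ 3) ^ 2) / 3)
        =O[𝓝 (0:ℝ)] (fun _ => (1:ℝ)) := by
      have hP : Filter.Tendsto (fun ξ : ℝ => a * ξ + a * (a ^ 2 * (1 + θ) / 2 - 1 / 6 -
          ς ^ 2 / 3 / 2) * ξ ^ 3) (𝓝 0) (𝓝 0) := by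
        have hcontp : Continuous (fun ξ : ℝ => a * ξ + a * (a ^ 2 * (1 + θ) / 2 - 1 / 6 -
            ς ^ 2 / 3 / 2) * ξ ^ 3) := by fun_prop
        have := hcontp.tendsto 0
        simpa using this
      have ht := tendsto_tfun a θ ς
      have : Filter.Tendsto (fun ξ : ℝ => 1 - (tfun a θ ς ξ ^ 2 + tfun a θ ς ξ *
          (a * ξ + a * (a ^ 2 * (1 + θ) / 2 - 1 / 6 - ς ^ 2 / 3 / 2) * ξ ^ 3) +
          (a * ξ + a * (a ^ 2 * (1 + θ) / 2 - 1 / 6 - ς ^ 2 / 3 / 2) * ξ ^ 3) ^ 2) / 3)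
          (𝓝 0) (𝓝 (1 - ((0:ℝ) ^ 2 + 0 * 0 + 0 ^ 2) / 3)) := by
        apply Filter.Tendsto.sub tendsto_const_nhds
        apply Filter.Tendsto.div_const
        exact ((ht.pow 2).add (ht.mul hP)).add (hP.pow 2)
      exact this.isBigO_one ℝ
    have oP5 : (fun ξ : ℝ => ξ ^ 4 * (a ^ 2 * (a * (a ^ 2 * (1 + θ) / 2 - 1 / 6 -
        ς ^ 2 / 3 / 2)) * ξ + a * (a * (a ^ 2 * (1 + θ) / 2 - 1 / 6 - ς ^ 2 / 3 / 2)) ^ 2 * ξ ^ 3 +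
        (a * (a ^ 2 * (1 + θ) / 2 - 1 / 6 - ς ^ 2 / 3 / 2)) ^ 3 / 3 * ξ ^ 5))
        =O[𝓝 (0:ℝ)] fun ξ => ξ ^ 4 := by
      refine oO_mul4 (isBigO_refl _ _) ?_
      have hcontp : Continuous (fun ξ : ℝ => a ^ 2 * (a * (a ^ 2 * (1 + θ) / 2 - 1 / 6 -
          ς ^ 2 / 3 / 2)) * ξ + a * (a * (a ^ 2 * (1 + θ) / 2 - 1 / 6 - ς ^ 2 / 3 / 2)) ^ 2 * ξ ^ 3 +
          (a * (a ^ 2 * (1 + θ) / 2 - 1 / 6 - ς ^ 2 / 3 / 2)) ^ 3 / 3 * ξ ^ 5) := by fun_prop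
      exact (hcontp.tendsto 0).isBigO_one ℝ
    have obase := (oO_mul4 het oW).sub oP5
    refine obase.congr (fun ξ => ?_) (fun _ => rfl)
    ring
  -- assemble
  have final := ((hD1.mono hL).sub hD2).sub (hD3.mono hL)
  refine final.congr (fun ξ => ?_) (fun _ => rfl)
  ring

end

end PhaseAux

/-- Leading-order phase error of the predictor–corrector scheme:
`Δφ(ξ) = φ(ξ) − φ̂(ξ) = −(cℵ/6)((cℵ)²(3θ+1) − 1)ξ³ + O(ξ⁴)` as `ξ → 0⁺`;
in particular, if `cℵ = 1/√(1+3θ)` then `Δφ(ξ) = O(ξ⁴)`. -/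
theorem phase_error_leading_order
    (c al θ ς : ℝ) (hc : 0 < c) (hal : 0 < al) (hθ : θ ∈ Set.Icc (0 : ℝ) 1)
    (φ φd : ℝ → ℝ)
    (hφ : ∀ ξ : ℝ, φ ξ = c * al * ξ / Real.sqrt (1 + ς ^ 2 * ξ ^ 2 / 3))
    (hφd : ∀ ξ ∈ Set.Ioo (0 : ℝ) Real.pi,
      φd ξ =
        Real.arccos ((1 - (4 * c ^ 2 * al ^ 2 * Real.sin (ξ / 2) ^ 2) * (1 + θ)
            / (2 * (1 + 4 * ς ^ 2 / 3 * Real.sin (ξ / 2) ^ 2)))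
          / Real.sqrt ((1 - (4 * c ^ 2 * al ^ 2 * Real.sin (ξ / 2) ^ 2) * (1 + θ)
              / (2 * (1 + 4 * ς ^ 2 / 3 * Real.sin (ξ / 2) ^ 2))) ^ 2
            + (c * al * Real.sin ξ) ^ 2
              / (1 + 4 * ς ^ 2 / 3 * Real.sin (ξ / 2) ^ 2)))) :
    ((fun ξ : ℝ =>
        (φ ξ - φd ξ) + (c * al / 6) * ((c * al) ^ 2 * (3 * θ + 1) - 1) * ξ ^ 3)
      =O[𝓝[>] (0 : ℝ)] (fun ξ : ℝ => ξ ^ 4)) ∧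
    (c * al = 1 / Real.sqrt (1 + 3 * θ) →
      (fun ξ : ℝ => φ ξ - φd ξ) =O[𝓝[>] (0 : ℝ)] (fun ξ : ℝ => ξ ^ 4)) := by
  have ha : 0 < c * al := mul_pos hc hal
  have hmain := PhaseAux.main_exp (c * al) θ ς ha hθ.1
  have hL : 𝓝[>] (0:ℝ) ≤ 𝓝 0 := nhdsWithin_le_nhds
  have hev : (fun ξ : ℝ => (c * al * ξ / Real.sqrt (1 + ς ^ 2 * ξ ^ 2 / 3)
        - Real.arctan (PhaseAux.tfun (c * al) θ ς ξ))
        + c * al / 6 * ((c * al) ^ 2 * (3 * θ + 1) - 1) * ξ ^ 3)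
      =ᶠ[𝓝[>] (0:ℝ)] (fun ξ : ℝ =>
        (φ ξ - φd ξ) + (c * al / 6) * ((c * al) ^ 2 * (3 * θ + 1) - 1) * ξ ^ 3) := by
    have h1 : ∀ᶠ ξ in 𝓝[>] (0:ℝ), (0:ℝ) < ξ := eventually_mem_nhdsWithin
    have h2 : ∀ᶠ ξ in 𝓝[>] (0:ℝ), ξ < Real.pi := hL (eventually_lt_nhds Real.pi_pos)
    have hApos : ∀ᶠ ξ in 𝓝[>] (0:ℝ), 0 < PhaseAux.Afun (c * al) θ ς ξ :=
      hL ((PhaseAux.tendsto_Afun (c * al) θ ς).eventually (eventually_gt_nhds one_pos))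
    filter_upwards [h1, h2, hApos] with ξ hξ0 hξπ hA
    have hφdξ := hφd ξ ⟨hξ0, hξπ⟩
    have hden : (1 + 4 * ς ^ 2 / 3 * Real.sin (ξ / 2) ^ 2) = PhaseAux.hfun ς ξ := rfl
    have hXA : (1 - (4 * c ^ 2 * al ^ 2 * Real.sin (ξ / 2) ^ 2) * (1 + θ)
        / (2 * PhaseAux.hfun ς ξ)) = PhaseAux.Afun (c * al) θ ς ξ := by
      simp only [PhaseAux.Afun]
      ring
    have hy2 : (c * al * Real.sin ξ) ^ 2 / PhaseAux.hfun ς ξ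
        = (c * al * Real.sin ξ * (Real.sqrt (PhaseAux.hfun ς ξ))⁻¹) ^ 2 := by
      have hexp : (c * al * Real.sin ξ * (Real.sqrt (PhaseAux.hfun ς ξ))⁻¹) ^ 2
          = (c * al * Real.sin ξ) ^ 2 * (Real.sqrt (PhaseAux.hfun ς ξ) ^ 2)⁻¹ := by ring
      rw [hexp, Real.sq_sqrt (PhaseAux.hfun_pos ς ξ).le, div_eq_mul_inv]
    have hy0 : 0 ≤ c * al * Real.sin ξ * (Real.sqrt (PhaseAux.hfun ς ξ))⁻¹ := by
      have hs : 0 ≤ Real.sin ξ := (Real.sin_pos_of_pos_of_lt_pi hξ0 hξπ).le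
      have h3 := Real.sqrt_nonneg (PhaseAux.hfun ς ξ)
      positivity
    have heq : φd ξ = Real.arctan (PhaseAux.tfun (c * al) θ ς ξ) := by
      rw [hφdξ, hden, hXA, hy2, PhaseAux.arccos_eq_arctan_div hA hy0, div_eq_mul_inv]
      rfl
    rw [hφ ξ, heq]
  have part1 : (fun ξ : ℝ =>
      (φ ξ - φd ξ) + (c * al / 6) * ((c * al) ^ 2 * (3 * θ + 1) - 1) * ξ ^ 3)
      =O[𝓝[>] (0:ℝ)] (fun ξ : ℝ => ξ ^ 4) :=
    hmain.congr' hev (Filter.EventuallyEq.refl _ _)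
  refine ⟨part1, fun hK => ?_⟩
  have h13 : (0:ℝ) ≤ 1 + 3 * θ := by linarith [hθ.1]
  have hsq : (c * al) ^ 2 * (3 * θ + 1) = 1 := by
    rw [hK, div_pow, one_pow, Real.sq_sqrt h13]
    have hne : (1:ℝ) + 3 * θ ≠ 0 := by linarith [hθ.1]
    field_simp
    ring
  have hfe : (fun ξ : ℝ => φ ξ - φd ξ) = (fun ξ : ℝ =>
      (φ ξ - φd ξ) + (c * al / 6) * ((c * al) ^ 2 * (3 * θ + 1) - 1) * ξ ^ 3) := by
    funext ξ
    rw [hsq]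
    ring
  rw [hfe]
  exact part1
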